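/- Let ℓ be prime, q ≡ 1 (mod ℓ²), and χ the multiplicative character of 𝔽_q^* of order ℓ² determined by χ(x) ≡ x^{(q-1)/ℓ²} (mod q). Then the number of projective points on C_ℓ: y^ℓ = x(x^ℓ - 1) over 𝔽_q equals q + 1 + Σ_{a ∈ (ℤ/ℓ²ℤ)^*} J_q(aℓ(ℓ-1), a), where J_q(a, b) = Σ_{x ∈ 𝔽_q} χ^a(x) χ^b(1-x) is the Jacobi sum. -/

import Mathlib

open Finset Polynomial

private lemma count_pow_roots (ℓ : ℕ) (hℓ : ℓ.Prime)
    (F : Type*) [Field F] [Fintype F] [DecidableEq F]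
    (χ : MulChar F ℂ) (hχ : orderOf χ = ℓ ^ 2) (u : F) :
    (((univ : Finset F).filter fun y : F => y ^ ℓ = u).card : ℂ)
      = (if u = 0 then 1 else 0) + ∑ j ∈ range ℓ, (χ ^ (ℓ * j)) u := by
  have hℓ0 : ℓ ≠ 0 := hℓ.ne_zero
  have hq1 : ℓ ∣ Fintype.card F - 1 := by
    have h := MulChar.orderOf_dvd_card_sub_one F χ
    rw [hχ] at h
    exact dvd_trans (dvd_pow_self ℓ two_ne_zero) h
  have hqne : Fintype.card F - 1 ≠ 0 := Nat.sub_ne_zero_of_lt Fintype.one_lt_card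
  rcases eq_or_ne u 0 with rfl | hu
  · rw [if_pos rfl]
    have h1 : ((univ : Finset F).filter fun y : F => y ^ ℓ = 0) = {0} := by
      ext y; simp [pow_eq_zero_iff hℓ0]
    rw [h1, Finset.sum_eq_zero (fun j _ => MulChar.map_nonunit _ not_isUnit_zero)]
    simp
  · rw [if_neg hu]
    obtain ⟨w, rfl⟩ := isUnit_iff_ne_zero.mpr hu
    obtain ⟨g, hg⟩ := IsCyclic.exists_generator (α := Fˣ)
    have hgo : orderOf g = Fintype.card F - 1 := by
      rw [orderOf_eq_card_of_forall_mem_zpowers hg, Nat.card_eq_fintype_card, Fintype.card_units]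
    have hζ : orderOf (χ g.val) = ℓ ^ 2 := by
      rw [← hχ]
      apply orderOf_eq_orderOf_iff.mpr
      intro m
      rw [MulChar.eq_iff hg, MulChar.one_apply_coe, MulChar.pow_apply_coe]
    obtain ⟨k, hk⟩ := (Submonoid.mem_powers_iff _ _).mp
      (mem_powers_iff_mem_zpowers.mpr (hg w))
    have hwval : (w : F) = (g : F) ^ k := by rw [← hk]; rfl
    set ζ : ℂ := χ g.val with hζdef
    have hsum : ∑ j ∈ range ℓ, (χ ^ (ℓ * j)) (w : F) = ∑ j ∈ range ℓ, (ζ ^ (ℓ * k)) ^ j := by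
      refine Finset.sum_congr rfl fun j _ => ?_
      rw [MulChar.pow_apply_coe, hwval, map_pow, ← pow_mul, ← pow_mul]
      ring_nf
      rfl
    set c : ℂ := ζ ^ (ℓ * k) with hcdef
    have hcℓ : c ^ ℓ = 1 := by
      rw [hcdef, ← pow_mul]
      have : ℓ * k * ℓ = ℓ ^ 2 * k := by ring
      rw [this, pow_mul, ← hζ, pow_orderOf_eq_one, one_pow]
    have hc1 : c = 1 ↔ ℓ ∣ k := by
      rw [hcdef, ← orderOf_dvd_iff_pow_eq_one, hζ, pow_two,
        Nat.mul_dvd_mul_iff_left hℓ.pos]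
    by_cases hdk : ℓ ∣ k
    · -- card = ℓ, sum = ℓ
      have hcard1 : ((univ : Finset F).filter fun z : F => z ^ ℓ = 1).card = ℓ := by
        have hord : orderOf (g ^ ((Fintype.card F - 1) / ℓ)) = ℓ := by
          rw [orderOf_pow, hgo, Nat.gcd_eq_right (Nat.div_dvd_of_dvd hq1),
            Nat.div_div_self hq1 hqne]
        have hprim : IsPrimitiveRoot ((g ^ ((Fintype.card F - 1) / ℓ) : Fˣ) : F) ℓ := by
          have h2 := IsPrimitiveRoot.orderOf (g ^ ((Fintype.card F - 1) / ℓ))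
          rw [hord] at h2
          exact IsPrimitiveRoot.coe_units_iff.mpr h2
        have heq : ((univ : Finset F).filter fun z : F => z ^ ℓ = 1)
            = nthRootsFinset ℓ (1 : F) := by
          ext z; simp [Polynomial.mem_nthRootsFinset hℓ.pos]
        rw [heq, hprim.card_nthRootsFinset]
      obtain ⟨k', rfl⟩ := hdk
      have hy0 : ((g : F) ^ k') ≠ 0 := pow_ne_zero _ (Units.ne_zero g)
      have hy0ℓ : ((g : F) ^ k') ^ ℓ = (w : F) := by
        rw [hwval, ← pow_mul, mul_comm k' ℓ]
      have hcard : ((univ : Finset F).filter fun y : F => y ^ ℓ = (w : F)).card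
          = ((univ : Finset F).filter fun z : F => z ^ ℓ = 1).card := by
        apply Finset.card_nbij' (i := fun y => y * ((g : F) ^ k')⁻¹)
          (j := fun z => z * ((g : F) ^ k'))
        · intro a ha
          simp only [Finset.mem_coe, mem_filter, mem_univ, true_and] at ha ⊢
          rw [mul_pow, ha, inv_pow, hy0ℓ, mul_inv_cancel₀ (Units.ne_zero w)]
        · intro a ha
          simp only [Finset.mem_coe, mem_filter, mem_univ, true_and] at ha ⊢
          rw [mul_pow, ha, hy0ℓ, one_mul]
        · intro a _
          field_simp
        · intro a _
          field_simp
      rw [hcard, hcard1, hsum]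
      have hco : c = 1 := hc1.mpr ⟨k', rfl⟩
      rw [hco]
      simp
    · -- card = 0, sum = 0
      have hcard : ((univ : Finset F).filter fun y : F => y ^ ℓ = (w : F)) = ∅ := by
        rw [Finset.filter_eq_empty_iff]
        intro y _
        intro hy
        have hyne : y ≠ 0 := by
          intro h; rw [h, zero_pow hℓ0] at hy; exact (Units.ne_zero w) hy.symm
        obtain ⟨v, rfl⟩ := isUnit_iff_ne_zero.mpr hyne
        have hv : v ^ ℓ = w := Units.ext (by rw [← hy]; simp)
        obtain ⟨m, hm⟩ := (Submonoid.mem_powers_iff _ _).mp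
          (mem_powers_iff_mem_zpowers.mpr (hg v))
        rw [← hm, ← pow_mul, ← hk] at hv
        have hmod : m * ℓ ≡ k [MOD ℓ] :=
          Nat.ModEq.of_dvd hq1 (hgo ▸ pow_eq_pow_iff_modEq.mp hv)
        have : k ≡ 0 [MOD ℓ] :=
          (hmod.symm.trans ((Nat.modEq_zero_iff_dvd).mpr ⟨m, mul_comm m ℓ⟩))
        exact hdk ((Nat.modEq_zero_iff_dvd).mp this)
      rw [hcard, hsum]
      have hc : c ≠ 1 := fun h => hdk (hc1.mp h)
      rw [geom_sum_eq hc, hcℓ]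
      simp

private lemma step_bc (ℓ : ℕ) (hℓ : ℓ.Prime)
    (F : Type*) [Field F] [Fintype F] [DecidableEq F]
    (χ : MulChar F ℂ) (hχ : orderOf χ = ℓ ^ 2) :
    (Fintype.card {p : F × F // p.2 ^ ℓ = p.1 * (p.1 ^ ℓ - 1)} : ℂ)
      = (Fintype.card F : ℂ) + ∑ j ∈ Ico 1 ℓ, ∑ m ∈ range ℓ, ∑ t : F,
          (χ ^ (ℓ * m + j)) t * (χ ^ (ℓ * j)) (t - 1) := by
  classical
  have hone_apply : ∀ u : F, u ≠ 0 → (1 : MulChar F ℂ) u = 1 := fun u hu => by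
    have h := MulChar.one_apply_coe (R' := ℂ) (isUnit_iff_ne_zero.mpr hu).unit
    rwa [IsUnit.unit_spec] at h
  have hB : (Fintype.card {p : F × F // p.2 ^ ℓ = p.1 * (p.1 ^ ℓ - 1)} : ℕ)
      = ∑ x : F, ((univ : Finset F).filter fun y : F => y ^ ℓ = x * (x ^ ℓ - 1)).card := by
    rw [Fintype.card_congr
      (Equiv.subtypeProdEquivSigmaSubtype (fun a b : F => b ^ ℓ = a * (a ^ ℓ - 1))),
      Fintype.card_sigma]
    exact Finset.sum_congr rfl fun x _ => Fintype.card_subtype _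
  have hcount := count_pow_roots ℓ hℓ F χ hχ
  -- main per-j transformation
  have key : ∀ j ∈ Ico 1 ℓ, ∑ x : F, (χ ^ (ℓ * j)) (x * (x ^ ℓ - 1))
      = ∑ m ∈ range ℓ, ∑ t : F, (χ ^ (ℓ * m + j)) t * (χ ^ (ℓ * j)) (t - 1) := by
    intro j hj
    rw [mem_Ico] at hj
    have hj0 : j ≠ 0 := Nat.one_le_iff_ne_zero.mp hj.1
    have hℓj0 : ℓ * j ≠ 0 := Nat.mul_ne_zero hℓ.ne_zero hj0
    have h1 : ∀ x : F, (χ ^ (ℓ * j)) (x * (x ^ ℓ - 1))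
        = (χ ^ j) (x ^ ℓ) * (χ ^ (ℓ * j)) (x ^ ℓ - 1) := by
      intro x
      rw [map_mul]
      congr 1
      rw [MulChar.pow_apply' _ hℓj0, MulChar.pow_apply' _ hj0, map_pow, ← pow_mul]
    calc ∑ x : F, (χ ^ (ℓ * j)) (x * (x ^ ℓ - 1))
        = ∑ x : F, (χ ^ j) (x ^ ℓ) * (χ ^ (ℓ * j)) (x ^ ℓ - 1) :=
          Finset.sum_congr rfl fun x _ => h1 x
      _ = ∑ x : F, ∑ t : F, if x ^ ℓ = t then (χ ^ j) t * (χ ^ (ℓ * j)) (t - 1) else 0 := by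
          refine Finset.sum_congr rfl fun x _ => ?_
          rw [Finset.sum_ite_eq univ (x ^ ℓ) (fun t => (χ ^ j) t * (χ ^ (ℓ * j)) (t - 1))]
          simp
      _ = ∑ t : F, ∑ x : F, if x ^ ℓ = t then (χ ^ j) t * (χ ^ (ℓ * j)) (t - 1) else 0 :=
          Finset.sum_comm
      _ = ∑ t : F, (((univ : Finset F).filter fun x : F => x ^ ℓ = t).card : ℂ)
            * ((χ ^ j) t * (χ ^ (ℓ * j)) (t - 1)) := by
          refine Finset.sum_congr rfl fun t _ => ?_
          rw [← Finset.sum_filter, Finset.sum_const, nsmul_eq_mul]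
      _ = ∑ t : F, ((if t = 0 then (1:ℂ) else 0) + ∑ m ∈ range ℓ, (χ ^ (ℓ * m)) t)
            * ((χ ^ j) t * (χ ^ (ℓ * j)) (t - 1)) := by
          refine Finset.sum_congr rfl fun t _ => ?_
          rw [hcount t]
      _ = ∑ t : F, ((if t = 0 then (1:ℂ) else 0) * ((χ ^ j) t * (χ ^ (ℓ * j)) (t - 1)))
          + ∑ t : F, (∑ m ∈ range ℓ, (χ ^ (ℓ * m)) t) * ((χ ^ j) t * (χ ^ (ℓ * j)) (t - 1)) := by
          rw [← Finset.sum_add_distrib]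
          exact Finset.sum_congr rfl fun t _ => by ring
      _ = ∑ m ∈ range ℓ, ∑ t : F, (χ ^ (ℓ * m + j)) t * (χ ^ (ℓ * j)) (t - 1) := by
          have e1 : ∑ t : F, ((if t = 0 then (1:ℂ) else 0) * ((χ ^ j) t * (χ ^ (ℓ * j)) (t - 1)))
              = 0 := by
            rw [Finset.sum_eq_single 0]
            · simp [MulChar.map_nonunit _ (not_isUnit_zero (M₀ := F))]
            · intro t _ ht; rw [if_neg ht, zero_mul]
            · simp
          rw [e1, zero_add]
          have e2 : ∀ t : F,
              (∑ m ∈ range ℓ, (χ ^ (ℓ * m)) t) * ((χ ^ j) t * (χ ^ (ℓ * j)) (t - 1))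
              = ∑ m ∈ range ℓ, (χ ^ (ℓ * m + j)) t * (χ ^ (ℓ * j)) (t - 1) := by
            intro t
            rw [Finset.sum_mul]
            refine Finset.sum_congr rfl fun m _ => ?_
            rw [pow_add, MulChar.mul_apply, mul_assoc]
          rw [Finset.sum_congr rfl fun t _ => e2 t]
          exact Finset.sum_comm
  calc (Fintype.card {p : F × F // p.2 ^ ℓ = p.1 * (p.1 ^ ℓ - 1)} : ℂ)
      = ∑ x : F, (((univ : Finset F).filter fun y : F => y ^ ℓ = x * (x ^ ℓ - 1)).card : ℂ) := by
        rw [hB]; push_cast; rfl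
    _ = ∑ x : F, ((if x * (x ^ ℓ - 1) = 0 then (1:ℂ) else 0)
          + ∑ j ∈ range ℓ, (χ ^ (ℓ * j)) (x * (x ^ ℓ - 1))) :=
        Finset.sum_congr rfl fun x _ => hcount _
    _ = ∑ x : F, (if x * (x ^ ℓ - 1) = 0 then (1:ℂ) else 0)
          + ∑ j ∈ range ℓ, ∑ x : F, (χ ^ (ℓ * j)) (x * (x ^ ℓ - 1)) := by
        rw [Finset.sum_add_distrib, Finset.sum_comm]
    _ = (Fintype.card F : ℂ) + ∑ j ∈ Ico 1 ℓ, ∑ m ∈ range ℓ, ∑ t : F,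
          (χ ^ (ℓ * m + j)) t * (χ ^ (ℓ * j)) (t - 1) := by
        conv_lhs => rw [Finset.range_eq_Ico, Finset.sum_eq_sum_Ico_succ_bot hℓ.pos]
        rw [← add_assoc]
        congr 1
        · have e3 : ∑ x : F, (χ ^ (ℓ * 0)) (x * (x ^ ℓ - 1))
              = ∑ x : F, (1 : MulChar F ℂ) (x * (x ^ ℓ - 1)) :=
            Finset.sum_congr rfl fun x _ => by rw [mul_zero, pow_zero]
          rw [e3, ← Finset.sum_add_distrib]
          have e4 : ∀ x : F, (if x * (x ^ ℓ - 1) = 0 then (1:ℂ) else 0)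
              + (1 : MulChar F ℂ) (x * (x ^ ℓ - 1)) = 1 := by
            intro x
            rcases eq_or_ne (x * (x ^ ℓ - 1)) 0 with h | h
            · rw [h, if_pos rfl, MulChar.map_nonunit _ (not_isUnit_zero (M₀ := F)), add_zero]
            · rw [if_neg h, hone_apply _ h, zero_add]
          rw [Finset.sum_congr rfl fun x _ => e4 x, Finset.sum_const, nsmul_eq_mul,
            mul_one, Finset.card_univ]
        · exact Finset.sum_congr rfl key

private lemma step_d (ℓ : ℕ) [NeZero ℓ] (hℓ : ℓ.Prime)
    (F : Type*) [Field F] [Fintype F] [DecidableEq F]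
    (χ : MulChar F ℂ) (hχ : orderOf χ = ℓ ^ 2) :
    ∑ j ∈ Ico 1 ℓ, ∑ m ∈ range ℓ, ∑ t : F, (χ ^ (ℓ * m + j)) t * (χ ^ (ℓ * j)) (t - 1)
      = ∑ b : (ZMod (ℓ ^ 2))ˣ, ∑ t : F,
          (χ ^ ((b : ZMod (ℓ ^ 2)).val)) t * (χ ^ (ℓ * (b : ZMod (ℓ ^ 2)).val)) (t - 1) := by
  have hn0 : (ℓ : ℕ) ^ 2 ≠ 0 := pow_ne_zero 2 hℓ.ne_zero
  haveI : NeZero (ℓ ^ 2) := ⟨hn0⟩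
  have hmodχ : ∀ a b : ℕ, a ≡ b [MOD ℓ ^ 2] → χ ^ a = χ ^ b := fun a b h =>
    pow_eq_pow_iff_modEq.mpr (by rw [hχ]; exact h)
  set W : ℕ → ℂ := fun k => ∑ t : F, (χ ^ k) t * (χ ^ (ℓ * k)) (t - 1) with hW
  have part1 : ∑ j ∈ Ico 1 ℓ, ∑ m ∈ range ℓ, ∑ t : F,
      (χ ^ (ℓ * m + j)) t * (χ ^ (ℓ * j)) (t - 1)
      = ∑ k ∈ (range (ℓ ^ 2)).filter (fun k => ¬ ℓ ∣ k), W k := by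
    rw [← Finset.sum_product']
    refine Finset.sum_nbij' (i := fun p => p.1 + ℓ * p.2) (j := fun k => (k % ℓ, k / ℓ))
      ?_ ?_ ?_ ?_ ?_
    · rintro ⟨j, m⟩ hp
      rw [Finset.mem_product, mem_Ico, mem_range] at hp
      rw [Finset.mem_filter, mem_range]
      constructor
      · show j + ℓ * m < ℓ ^ 2
        have hm : m ≤ ℓ - 1 := by omega
        have h5 := Nat.mul_le_mul_left ℓ hm
        have h3 : ℓ * (ℓ - 1) + ℓ = ℓ * (ℓ - 1 + 1) := (Nat.mul_succ ℓ (ℓ - 1)).symm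
        have h4 : ℓ - 1 + 1 = ℓ := by have := hℓ.pos; omega
        rw [h4] at h3
        have h6 : ℓ ^ 2 = ℓ * ℓ := sq ℓ
        omega
      · show ¬ ℓ ∣ j + ℓ * m
        intro hdvd
        have hdvd' : ℓ ∣ j + ℓ * m := hdvd
        have hj : ℓ ∣ j := (Nat.dvd_add_right (⟨m, rfl⟩ : ℓ ∣ ℓ * m)).mp
          (by rwa [add_comm] at hdvd')
        have := Nat.le_of_dvd (by omega) hj
        omega
    · intro k hk
      rw [Finset.mem_filter, mem_range] at hk
      rw [Finset.mem_product, mem_Ico, mem_range]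
      refine ⟨⟨?_, Nat.mod_lt _ hℓ.pos⟩, ?_⟩
      · rcases Nat.eq_zero_or_pos (k % ℓ) with h | h
        · exact absurd (Nat.dvd_of_mod_eq_zero h) hk.2
        · exact h
      · have : k < ℓ * ℓ := by rw [← sq]; exact hk.1
        exact Nat.div_lt_of_lt_mul this
    · rintro ⟨j, m⟩ hp
      rw [Finset.mem_product, mem_Ico, mem_range] at hp
      have h1 : (j + ℓ * m) % ℓ = j := by
        rw [Nat.add_mul_mod_self_left, Nat.mod_eq_of_lt hp.1.2]
      have h2 : (j + ℓ * m) / ℓ = m := by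
        rw [Nat.add_mul_div_left _ _ hℓ.pos, Nat.div_eq_of_lt hp.1.2, zero_add]
      simp [h1, h2]
    · intro k _
      simp [Nat.mod_add_div]
    · rintro ⟨j, m⟩ hp
      rw [Finset.mem_product, mem_Ico, mem_range] at hp
      have e1 : χ ^ (ℓ * m + j) = χ ^ (j + ℓ * m) := by rw [add_comm]
      have e2 : χ ^ (ℓ * j) = χ ^ (ℓ * (j + ℓ * m)) := by
        apply hmodχ
        refine (Nat.modEq_iff_dvd' (Nat.mul_le_mul_left ℓ (Nat.le_add_right _ _))).mpr ?_
        have h5 : ℓ * (j + ℓ * m) - ℓ * j = ℓ ^ 2 * m := by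
          have : ℓ * (j + ℓ * m) = ℓ * j + ℓ ^ 2 * m := by ring
          omega
        exact ⟨m, h5⟩
      show (∑ t : F, (χ ^ (ℓ * m + j)) t * (χ ^ (ℓ * j)) (t - 1)) = W (j + ℓ * m)
      rw [hW]
      exact Finset.sum_congr rfl fun t _ => by rw [e1, e2]
  have part2 : ∑ b : (ZMod (ℓ ^ 2))ˣ, ∑ t : F,
      (χ ^ ((b : ZMod (ℓ ^ 2)).val)) t * (χ ^ (ℓ * (b : ZMod (ℓ ^ 2)).val)) (t - 1)
      = ∑ k ∈ (range (ℓ ^ 2)).filter (fun k => ¬ ℓ ∣ k), W k := by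
    refine Finset.sum_nbij' (i := fun b => ((b : ZMod (ℓ ^ 2)).val))
      (j := fun k => if h : Nat.Coprime k (ℓ ^ 2) then ZMod.unitOfCoprime k h else 1)
      ?_ ?_ ?_ ?_ ?_
    · intro b _
      rw [Finset.mem_filter, mem_range]
      refine ⟨ZMod.val_lt _, fun hdvd => ?_⟩
      have hunit : IsUnit (((b : ZMod (ℓ ^ 2)).val : ℕ) : ZMod (ℓ ^ 2)) := by
        rw [ZMod.natCast_val, ZMod.cast_id]
        exact b.isUnit
      rw [ZMod.isUnit_iff_coprime] at hunit
      have : ℓ ∣ Nat.gcd ((b : ZMod (ℓ ^ 2)).val) (ℓ ^ 2) :=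
        Nat.dvd_gcd hdvd (dvd_pow_self ℓ two_ne_zero)
      have h6 : Nat.gcd ((b : ZMod (ℓ ^ 2)).val) (ℓ ^ 2) = 1 := hunit
      rw [h6] at this
      exact hℓ.one_lt.ne' (Nat.dvd_one.mp this)
    · intro k _; exact Finset.mem_univ _
    · intro b _
      have hcop : Nat.Coprime ((b : ZMod (ℓ ^ 2)).val) (ℓ ^ 2) := by
        have hunit : IsUnit (((b : ZMod (ℓ ^ 2)).val : ℕ) : ZMod (ℓ ^ 2)) := by
          rw [ZMod.natCast_val, ZMod.cast_id]; exact b.isUnit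
        rwa [ZMod.isUnit_iff_coprime] at hunit
      show (if h : Nat.Coprime ((b : ZMod (ℓ ^ 2)).val) (ℓ ^ 2)
          then ZMod.unitOfCoprime _ h else 1) = b
      rw [dif_pos hcop]
      apply Units.ext
      rw [ZMod.coe_unitOfCoprime, ZMod.natCast_val, ZMod.cast_id]
    · intro k hk
      rw [Finset.mem_filter, mem_range] at hk
      have hcop : Nat.Coprime k (ℓ ^ 2) :=
        Nat.Coprime.pow_right 2 ((hℓ.coprime_iff_not_dvd.mpr hk.2).symm)
      show ((((if h : Nat.Coprime k (ℓ ^ 2) then ZMod.unitOfCoprime k h else 1) :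
          (ZMod (ℓ ^ 2))ˣ) : ZMod (ℓ ^ 2))).val = k
      rw [dif_pos hcop]
      have h7 : ((ZMod.unitOfCoprime k hcop : (ZMod (ℓ ^ 2))ˣ) : ZMod (ℓ ^ 2)) = (k : ZMod (ℓ ^ 2)) :=
        ZMod.coe_unitOfCoprime k hcop
      rw [h7, ZMod.val_natCast, Nat.mod_eq_of_lt hk.1]
    · intro b _; rfl
  rw [part1, part2]

private lemma step_e (ℓ : ℕ) [NeZero ℓ] (hℓ : ℓ.Prime)
    (F : Type*) [Field F] [Fintype F] [DecidableEq F]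
    (χ : MulChar F ℂ) (hχ : orderOf χ = ℓ ^ 2) :
    ∑ b : (ZMod (ℓ ^ 2))ˣ, ∑ t : F,
        (χ ^ ((b : ZMod (ℓ ^ 2)).val)) t * (χ ^ (ℓ * (b : ZMod (ℓ ^ 2)).val)) (t - 1)
      = ∑ a : (ZMod (ℓ ^ 2))ˣ,
          ∑ x : F, (χ ^ ((a : ZMod (ℓ ^ 2)).val * (ℓ * (ℓ - 1)))) x
            * (χ ^ (a : ZMod (ℓ ^ 2)).val) (1 - x) := by
  haveI : NeZero (ℓ ^ 2) := ⟨pow_ne_zero 2 hℓ.ne_zero⟩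
  set n := ℓ ^ 2 with hn
  set P : ZMod n → MulChar F ℂ := fun c => χ ^ c.val with hPdef
  have hPcast : ∀ k : ℕ, χ ^ k = P ((k : ZMod n)) := by
    intro k
    rw [hPdef]
    apply pow_eq_pow_iff_modEq.mpr
    rw [hχ, ZMod.val_natCast]
    exact (Nat.mod_modEq k n).symm
  have hPadd : ∀ c d : ZMod n, P (c + d) = P c * P d := by
    intro c d
    rw [hPdef]
    show χ ^ (c + d).val = χ ^ c.val * χ ^ d.val
    rw [← pow_add, hPcast (c.val + d.val), hPcast ((c+d).val)]
    congr 1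
    push_cast [ZMod.natCast_val, ZMod.cast_id]
    rfl
  have hone_apply : ∀ u : F, u ≠ 0 → (1 : MulChar F ℂ) u = 1 := fun u hu => by
    have h := MulChar.one_apply_coe (R' := ℂ) (isUnit_iff_ne_zero.mpr hu).unit
    rwa [IsUnit.unit_spec] at h
  have hPzero : P 0 = 1 := by
    rw [hPdef]; show χ ^ (0 : ZMod n).val = 1; rw [ZMod.val_zero, pow_zero]
  have hPne : ∀ (c : ZMod n) (x : F), x ≠ 0 → P c x ≠ 0 := fun c x hx =>
    ((isUnit_iff_ne_zero.mpr hx).map (P c)).ne_zero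
  have hP1 : ∀ (c : ZMod n) (x : F), x ≠ 0 → P c x * P (-c) x = 1 := by
    intro c x hx
    rw [← MulChar.mul_apply, ← hPadd, add_neg_cancel, hPzero, hone_apply x hx]
  have hinv : ∀ (c : ZMod n) (x : F), x ≠ 0 → P c x⁻¹ = P (-c) x := by
    intro c x hx
    have h1 : P c x⁻¹ * P c x = 1 := by
      rw [← map_mul, inv_mul_cancel₀ hx, map_one]
    have h2 : P (-c) x * P c x = 1 := by rw [mul_comm]; exact hP1 c x hx
    exact mul_right_cancel₀ (hPne c x hx) (h1.trans h2.symm)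
  have hm1ne : (-1 : F) ≠ 0 := neg_ne_zero.mpr one_ne_zero
  have hneg1 : ∀ c : ZMod n, P (-c) (-1) = P c (-1) := by
    intro c
    have h1 : P (-c) (-1) * P c (-1) = 1 := by rw [mul_comm]; exact hP1 c _ hm1ne
    have h2 : P c (-1) * P c (-1) = 1 := by
      rw [← map_mul]; norm_num
    exact mul_right_cancel₀ (hPne c _ hm1ne) (h1.trans h2.symm)
  -- the inversion identity
  have IdI : ∀ c d : ZMod n, (∑ x : F, P c x * P d (1 - x))
      = P d (-1) * ∑ x : F, P (-(c + d)) x * P d (1 - x) := by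
    intro c d
    rw [Finset.mul_sum]
    refine (Fintype.sum_equiv (Function.Involutive.toPerm (fun x : F => x⁻¹)
      (fun x => inv_inv x)) _ _ ?_).symm
    intro x
    show P d (-1) * (P (-(c + d)) x * P d (1 - x)) = P c x⁻¹ * P d (1 - x⁻¹)
    rcases eq_or_ne x 0 with rfl | hx0
    · rw [inv_zero, MulChar.map_nonunit _ (not_isUnit_zero (M₀ := F)),
        MulChar.map_nonunit _ (not_isUnit_zero (M₀ := F))]
      ring
    rcases eq_or_ne x 1 with rfl | hx1
    · rw [inv_one, sub_self, MulChar.map_nonunit _ (not_isUnit_zero (M₀ := F))]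
      try ring
    have h9 : (1 : F) - x⁻¹ = (-1 * (1 - x)) * x⁻¹ := by field_simp; ring
      
    rw [h9, map_mul, map_mul, hinv d x hx0, hinv c x hx0]
    have h10 : P (-(c + d)) x = P (-c) x * P (-d) x := by
      rw [← MulChar.mul_apply, ← hPadd, neg_add]
    rw [h10]
    ring
  -- nilpotency facts
  have hz : (ℓ : ZMod n) * (ℓ : ZMod n) = 0 := by
    rw [← Nat.cast_mul, ← pow_two, ← hn, ZMod.natCast_self]
  have hnilp : IsNilpotent ((ℓ : ZMod n)) := ⟨2, by rw [pow_two, hz]⟩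
  set u₁ : (ZMod n)ˣ := (IsNilpotent.isUnit_one_sub hnilp).unit with hu₁def
  have hu₁ : (u₁ : ZMod n) = 1 - (ℓ : ZMod n) := IsUnit.unit_spec _
  -- Step 1 and 2 on the LHS
  have step1 : ∀ b : (ZMod n)ˣ, ∑ t : F, P (b : ZMod n) t * P (ℓ * (b : ZMod n)) (t - 1)
      = P (ℓ * (b : ZMod n)) (-1)
        * ∑ t : F, P (b : ZMod n) t * P (ℓ * (b : ZMod n)) (1 - t) := by
    intro b
    rw [Finset.mul_sum]
    refine Finset.sum_congr rfl fun t _ => ?_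
    have h11 : t - 1 = -1 * (1 - t) := by ring
    rw [h11, map_mul]
    ring
  have step2 : ∑ b : (ZMod n)ˣ, P (ℓ * (b : ZMod n)) (-1)
        * ∑ t : F, P ((1 - (ℓ : ZMod n)) * (b : ZMod n)) t * P (ℓ * (b : ZMod n)) (1 - t)
      = ∑ b : (ZMod n)ˣ, P (ℓ * (b : ZMod n)) (-1)
        * ∑ t : F, P (b : ZMod n) t * P (ℓ * (b : ZMod n)) (1 - t) := by
    refine Fintype.sum_equiv (Equiv.mulLeft u₁) _ _ ?_
    intro b
    have hval : ((u₁ * b : (ZMod n)ˣ) : ZMod n) = (1 - (ℓ : ZMod n)) * (b : ZMod n) := by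
      rw [Units.val_mul, hu₁]
    show P (ℓ * (b : ZMod n)) (-1)
        * ∑ t : F, P ((1 - (ℓ : ZMod n)) * (b : ZMod n)) t * P (ℓ * (b : ZMod n)) (1 - t)
      = P (ℓ * ((u₁ * b : (ZMod n)ˣ) : ZMod n)) (-1)
        * ∑ t : F, P ((u₁ * b : (ZMod n)ˣ) : ZMod n) t
          * P (ℓ * ((u₁ * b : (ZMod n)ˣ) : ZMod n)) (1 - t)
    rw [hval, show (ℓ : ZMod n) * ((1 - (ℓ : ZMod n)) * (b : ZMod n)) = ℓ * (b : ZMod n) by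
      linear_combination (-(b : ZMod n)) * hz]
  -- Steps on the RHS
  have step3 : ∀ a : (ZMod n)ˣ, ∑ x : F, P (-(ℓ * (a : ZMod n))) x * P (a : ZMod n) (1 - x)
      = P (ℓ * (a : ZMod n)) (-1)
        * ∑ x : F, P ((ℓ - 1) * (a : ZMod n)) x * P (-(ℓ * (a : ZMod n))) (1 - x) := by
    intro a
    have hcomm : ∑ x : F, P (-(ℓ * (a : ZMod n))) x * P (a : ZMod n) (1 - x)
        = ∑ x : F, P (a : ZMod n) x * P (-(ℓ * (a : ZMod n))) (1 - x) :=
      jacobiSum_comm (P (-(ℓ * (a : ZMod n)))) (P (a : ZMod n))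
    rw [hcomm, IdI ((a : ZMod n)) (-(ℓ * (a : ZMod n))), hneg1,
      show -((a : ZMod n) + -(ℓ * (a : ZMod n))) = (ℓ - 1) * (a : ZMod n) by ring]
  have step4 : ∑ a : (ZMod n)ˣ, P (ℓ * (a : ZMod n)) (-1)
        * ∑ x : F, P ((ℓ - 1) * (a : ZMod n)) x * P (-(ℓ * (a : ZMod n))) (1 - x)
      = ∑ a : (ZMod n)ˣ, P (ℓ * (a : ZMod n)) (-1)
        * ∑ x : F, P ((1 - (ℓ : ZMod n)) * (a : ZMod n)) x * P (ℓ * (a : ZMod n)) (1 - x) := by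
    refine Fintype.sum_equiv (Equiv.mulLeft (-1 : (ZMod n)ˣ)) _ _ ?_
    intro a
    have hval : (((-1 : (ZMod n)ˣ) * a : (ZMod n)ˣ) : ZMod n) = -(a : ZMod n) := by
      rw [Units.val_mul, Units.val_neg, Units.val_one]; ring
    show P (ℓ * (a : ZMod n)) (-1)
        * ∑ x : F, P ((ℓ - 1) * (a : ZMod n)) x * P (-(ℓ * (a : ZMod n))) (1 - x)
      = P (ℓ * (((-1 : (ZMod n)ˣ) * a : (ZMod n)ˣ) : ZMod n)) (-1)
        * ∑ x : F, P ((1 - (ℓ : ZMod n)) * (((-1 : (ZMod n)ˣ) * a : (ZMod n)ˣ) : ZMod n)) x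
          * P (ℓ * (((-1 : (ZMod n)ˣ) * a : (ZMod n)ˣ) : ZMod n)) (1 - x)
    rw [hval,
      show (ℓ : ZMod n) * -(a : ZMod n) = -(ℓ * (a : ZMod n)) by ring,
      show (1 - (ℓ : ZMod n)) * -(a : ZMod n) = ((ℓ : ZMod n) - 1) * (a : ZMod n) by ring,
      hneg1]
  -- put everything together
  have hLHS : ∀ b : (ZMod n)ˣ, ∑ t : F,
      (χ ^ ((b : ZMod n).val)) t * (χ ^ (ℓ * (b : ZMod n).val)) (t - 1)
      = ∑ t : F, P (b : ZMod n) t * P (ℓ * (b : ZMod n)) (t - 1) := by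
    intro b
    refine Finset.sum_congr rfl fun t _ => ?_
    have e1 : χ ^ ((b : ZMod n).val) = P (b : ZMod n) := by
      rw [hPcast, ZMod.natCast_val, ZMod.cast_id]
    have e2 : χ ^ (ℓ * (b : ZMod n).val) = P (ℓ * (b : ZMod n)) := by
      rw [hPcast]
      congr 1
      push_cast [ZMod.natCast_val, ZMod.cast_id]
      rfl
    rw [e1, e2]
  have hRHS : ∀ a : (ZMod n)ˣ, ∑ x : F,
      (χ ^ ((a : ZMod n).val * (ℓ * (ℓ - 1)))) x * (χ ^ (a : ZMod n).val) (1 - x)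
      = ∑ x : F, P (-(ℓ * (a : ZMod n))) x * P (a : ZMod n) (1 - x) := by
    intro a
    refine Finset.sum_congr rfl fun x _ => ?_
    have e1 : χ ^ ((a : ZMod n).val * (ℓ * (ℓ - 1))) = P (-(ℓ * (a : ZMod n))) := by
      rw [hPcast]
      congr 1
      have hcast : (((a : ZMod n).val * (ℓ * (ℓ - 1)) : ℕ) : ZMod n)
          = (a : ZMod n) * ((ℓ : ZMod n) * ((ℓ : ZMod n) - 1)) := by
        push_cast [ZMod.natCast_val, ZMod.cast_id, Nat.cast_sub hℓ.one_lt.le]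
        ring
      rw [hcast]
      linear_combination (a : ZMod n) * hz
    have e2 : χ ^ ((a : ZMod n).val) = P (a : ZMod n) := by
      rw [hPcast, ZMod.natCast_val, ZMod.cast_id]
    rw [e1, e2]
  calc ∑ b : (ZMod n)ˣ, ∑ t : F,
        (χ ^ ((b : ZMod n).val)) t * (χ ^ (ℓ * (b : ZMod n).val)) (t - 1)
      = ∑ b : (ZMod n)ˣ, ∑ t : F, P (b : ZMod n) t * P (ℓ * (b : ZMod n)) (t - 1) :=
        Finset.sum_congr rfl fun b _ => hLHS b
    _ = ∑ b : (ZMod n)ˣ, P (ℓ * (b : ZMod n)) (-1)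
          * ∑ t : F, P (b : ZMod n) t * P (ℓ * (b : ZMod n)) (1 - t) :=
        Finset.sum_congr rfl fun b _ => step1 b
    _ = ∑ b : (ZMod n)ˣ, P (ℓ * (b : ZMod n)) (-1)
          * ∑ t : F, P ((1 - (ℓ : ZMod n)) * (b : ZMod n)) t * P (ℓ * (b : ZMod n)) (1 - t) :=
        step2.symm
    _ = ∑ a : (ZMod n)ˣ, P (ℓ * (a : ZMod n)) (-1)
          * ∑ x : F, P ((ℓ - 1) * (a : ZMod n)) x * P (-(ℓ * (a : ZMod n))) (1 - x) :=
        step4.symm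
    _ = ∑ a : (ZMod n)ˣ, ∑ x : F, P (-(ℓ * (a : ZMod n))) x * P (a : ZMod n) (1 - x) :=
        (Finset.sum_congr rfl fun a _ => step3 a).symm
    _ = ∑ a : (ZMod n)ˣ, ∑ x : F,
          (χ ^ ((a : ZMod n).val * (ℓ * (ℓ - 1)))) x * (χ ^ (a : ZMod n).val) (1 - x) :=
        (Finset.sum_congr rfl fun a _ => hRHS a).symm

theorem stmt_6 (ℓ : ℕ) [NeZero ℓ] (hℓ : ℓ.Prime)
    (F : Type*) [Field F] [Fintype F] [DecidableEq F]
    (hdvd : ℓ ^ 2 ∣ Fintype.card F - 1)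
    (χ : MulChar F ℂ) (hχ : orderOf χ = ℓ ^ 2) :
    (Fintype.card {p : F × F // p.2 ^ ℓ = p.1 * (p.1 ^ ℓ - 1)} + 1 : ℂ)
      = (Fintype.card F : ℂ) + 1 +
        ∑ a : (ZMod (ℓ ^ 2))ˣ,
          ∑ x : F, (χ ^ ((a : ZMod (ℓ ^ 2)).val * (ℓ * (ℓ - 1)))) x
            * (χ ^ (a : ZMod (ℓ ^ 2)).val) (1 - x) := by
  rw [step_bc ℓ hℓ F χ hχ, step_d ℓ hℓ F χ hχ, step_e ℓ hℓ F χ hχ]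
  ring
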